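/- Suppose T : ℓ∞(c₀(ω₂)) → ℓ∞/c₀ is a bounded operator, ε > 0, m ∈ ℕ with ‖T‖ < m·ε/4, and σ₁, ..., σ_{2m} : ℕ → ω₂ are pairwise disjoint (as graphs) functions such that for each i there is a representative x_{σᵢ} of T(1_{σᵢ}) with B = ∩ᵢ {k : |x_{σᵢ}(k)| > ε/4} infinite. Then a contradiction arises; hence no such configuration exists. Precisely: there is no ultrafilter point u ∈ [B]* and indices j₁ < ... < j_m with all T(1_{σ_{jᵢ}})(u) of the same sign, compatible with ‖Σᵢ 1_{σ_{jᵢ}}‖ = 1. -/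

import Mathlib

open Filter Set
open scoped ZeroAtInfty

noncomputable section

abbrev LinfSeq : Type := lp (fun _ : ℕ => ℝ) ⊤

def c0Null : Submodule ℝ LinfSeq where
  carrier := {x | Tendsto (fun n => x n) atTop (nhds (0 : ℝ))}
  add_mem' := by
    intro x y hx hy
    simpa [lp.coeFn_add] using hx.add hy
  zero_mem' := by
    simpa [lp.coeFn_zero] using (tendsto_const_nhds : Tendsto (fun _ : ℕ => (0:ℝ)) atTop (nhds 0))
  smul_mem' := by
    intro c x hx
    have h := hx.const_mul c
    simpa [lp.coeFn_smul, smul_eq_mul] using h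

abbrev LinfModC0 : Type := LinfSeq ⧸ c0Null

/-- `y ∈ ℓ∞/c₀` is constantly `r` on the clopen set `[E]*` of `ℕ*`. -/
def ConstOnStar (E : Set ℕ) (r : ℝ) (y : LinfModC0) : Prop :=
  ∃ x : LinfSeq, Submodule.Quotient.mk x = y ∧
    Tendsto (fun n => x n) (atTop ⊓ 𝓟 E) (nhds r)

section c0
variable (Γ : Type) [TopologicalSpace Γ] [DiscreteTopology Γ]

def c0Ind (s : Set Γ) (hs : s.Finite) : C₀(Γ, ℝ) where
  toFun := s.indicator 1
  continuous_toFun := continuous_of_discreteTopology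
  zero_at_infty' := by
    have h : ∀ᶠ γ in cocompact Γ, γ ∉ s := by
      rw [cocompact_eq_cofinite]; exact hs.eventually_cofinite_notMem
    exact tendsto_const_nhds.congr' (h.mono fun γ hγ => (Set.indicator_of_notMem hγ 1).symm)

theorem c0Ind_norm_le (s : Set Γ) (hs : s.Finite) : ‖c0Ind Γ s hs‖ ≤ 1 := by
  rw [← ZeroAtInftyContinuousMap.norm_toBCF_eq_norm]
  refine (BoundedContinuousFunction.norm_le zero_le_one).2 fun γ => ?_
  by_cases h : γ ∈ s <;> simp [c0Ind, Set.indicator_apply, h]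

abbrev LinfC0 : Type := lp (fun _ : ℕ => C₀(Γ, ℝ)) ⊤

def IsPartialFun (σ : Set (ℕ × Γ)) : Prop :=
  ∀ ⦃n : ℕ⦄ ⦃β β' : Γ⦄, (n, β) ∈ σ → (n, β') ∈ σ → β = β'

theorem fiber_finite {σ : Set (ℕ × Γ)} (hσ : IsPartialFun Γ σ) (n : ℕ) :
    {β : Γ | (n, β) ∈ σ}.Finite :=
  Set.Subsingleton.finite fun β hβ β' hβ' => hσ hβ hβ'

/-- `1_σ ∈ ℓ∞(c₀(Γ))`, the indicator of the graph of a partial function `σ`. -/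
def oneGraph (σ : Set (ℕ × Γ)) (hσ : IsPartialFun Γ σ) : LinfC0 Γ :=
  ⟨fun n => c0Ind Γ {β : Γ | (n, β) ∈ σ} (fiber_finite Γ hσ n), by
    apply memℓp_infty
    refine ⟨1, ?_⟩
    rintro - ⟨n, rfl⟩
    exact c0Ind_norm_le Γ _ _⟩

theorem isPartialFun_graph (σ : ℕ → Γ) : IsPartialFun Γ {p : ℕ × Γ | σ p.1 = p.2} := by
  rintro n β β' h h'
  simp only [Set.mem_setOf_eq] at h h'
  exact h.symm.trans h'

/-- `1_σ` for a total function `σ : ℕ → Γ`. -/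
def oneFun (σ : ℕ → Γ) : LinfC0 Γ :=
  oneGraph Γ {p : ℕ × Γ | σ p.1 = p.2} (isPartialFun_graph Γ σ)

theorem isPartialFun_single (n : ℕ) (α : Γ) : IsPartialFun Γ {(n, α)} := by
  rintro m β β' h h'
  simp only [Set.mem_singleton_iff, Prod.mk.injEq] at h h'
  exact h.2.trans h'.2.symm

/-- `1_{n,α}`, the indicator of `{(n,α)}`. -/
def onePt (n : ℕ) (α : Γ) : LinfC0 Γ :=
  oneGraph Γ {(n, α)} (isPartialFun_single Γ n α)

end c0

section Banach
variable (Y : Type) [NormedAddCommGroup Y] [NormedSpace ℝ Y]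

abbrev LinfB : Type := lp (fun _ : ℕ => Y) ⊤

def c0NullB : Submodule ℝ (LinfB Y) where
  carrier := {x | Tendsto (fun n => x n) atTop (nhds (0 : Y))}
  add_mem' := by
    intro x y hx hy
    simpa [lp.coeFn_add] using hx.add hy
  zero_mem' := by
    simpa [lp.coeFn_zero] using (tendsto_const_nhds : Tendsto (fun _ : ℕ => (0:Y)) atTop (nhds 0))
  smul_mem' := by
    intro c x hx
    have h := hx.const_smul c
    simpa [lp.coeFn_smul] using h

abbrev LinfModC0B : Type := LinfB Y ⧸ c0NullB Y

end Banach



lemma c0_sum_apply {Γ : Type} [TopologicalSpace Γ] {ι : Type} (S : Finset ι)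
    (f : ι → C₀(Γ, ℝ)) (γ : Γ) : (∑ i ∈ S, f i) γ = ∑ i ∈ S, f i γ := by
  classical
  induction S using Finset.induction with
  | empty => simp
  | insert _ _ h ih =>
    rw [Finset.sum_insert h, Finset.sum_insert h, ZeroAtInftyContinuousMap.coe_add, Pi.add_apply,
      ih]

set_option maxHeartbeats 1000000 in
set_option synthInstance.maxHeartbeats 400000 in
/-- no such configuration exists: a bounded `T : ℓ∞(c₀(ω₂)) → ℓ∞/c₀` with
`‖T‖ < m·ε/4` and `2m` pairwise disjoint functions `σᵢ : ℕ → ω₂` whose images `T 1_{σᵢ}`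
have representatives `xᵢ` with `B = ⋂ᵢ {k : |xᵢ k| > ε/4}` infinite leads to a
contradiction (via an ultrafilter point of `[B]*`, a sign-pigeonhole and
`‖∑ 1_{σ_{jᵢ}}‖ = 1`). -/
theorem statement14 (Γ : Type) [TopologicalSpace Γ] [DiscreteTopology Γ]
    (hΓ : Cardinal.mk Γ = Cardinal.aleph 2)
    (T : LinfC0 Γ →L[ℝ] LinfModC0) (ε : ℝ) (hε : 0 < ε) (m : ℕ)
    (hT : ‖T‖ < m * ε / 4)
    (σ : Fin (2 * m) → ℕ → Γ)
    (hdis : ∀ i j, i ≠ j → ∀ n, σ i n ≠ σ j n)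
    (x : Fin (2 * m) → LinfSeq)
    (hx : ∀ i, Submodule.Quotient.mk (x i) = T (oneFun Γ (σ i)))
    (hB : (⋂ i, {k : ℕ | |x i k| > ε / 4}).Infinite) :
    False := by
  classical
  have hm4 : (0:ℝ) ≤ ‖T‖ := norm_nonneg T
  have hme : 0 < (m:ℝ) * ε / 4 := lt_of_le_of_lt hm4 hT
  have hmpos : 0 < m := by
    by_contra h
    push_neg at h
    interval_cases m
    simp at hme
  -- sign patterns
  set P : ℕ → Finset (Fin (2 * m)) := fun k => Finset.univ.filter fun i => 0 < x i k with hP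
  obtain ⟨pat, hpat⟩ : ∃ pat, {k | k ∈ (⋂ i, {k : ℕ | |x i k| > ε / 4}) ∧ P k = pat}.Infinite := by
    by_contra h
    push_neg at h
    simp only [Set.not_infinite] at h
    have hsub : (⋂ i, {k : ℕ | |x i k| > ε / 4}) ⊆
        ⋃ pat : Finset (Fin (2 * m)), {k | k ∈ (⋂ i, {k : ℕ | |x i k| > ε / 4}) ∧ P k = pat} :=
      fun k hk => Set.mem_iUnion.2 ⟨P k, hk, rfl⟩
    exact hB ((Set.finite_iUnion h).subset hsub)
  -- pigeonhole on signs
  obtain ⟨S, hScard, hSsign⟩ : ∃ S : Finset (Fin (2 * m)), m ≤ S.card ∧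
      ((∀ i ∈ S, i ∈ pat) ∨ (∀ i ∈ S, i ∉ pat)) := by
    by_cases h : m ≤ pat.card
    · exact ⟨pat, h, Or.inl fun i hi => hi⟩
    · refine ⟨patᶜ, ?_, Or.inr fun i hi => Finset.mem_compl.1 hi⟩
      rw [Finset.card_compl, Fintype.card_fin]
      omega
  have hSne : S.Nonempty := Finset.card_pos.1 (lt_of_lt_of_le hmpos hScard)
  set z : LinfSeq := ∑ i ∈ S, x i with hz
  have hzapp : ∀ k, z k = ∑ i ∈ S, x i k := by
    intro k
    rw [hz, lp.coeFn_sum, Finset.sum_apply]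
  -- lower bound on |z k| for k in the homogeneous set
  have hzk : ∀ k ∈ {k | k ∈ (⋂ i, {k : ℕ | |x i k| > ε / 4}) ∧ P k = pat},
      (m:ℝ) * ε / 4 < |z k| := by
    rintro k ⟨hkB, hkP⟩
    have hmem : ∀ i, ε / 4 < |x i k| := by
      intro i
      exact Set.mem_iInter.1 hkB i
    have hcard : (m:ℝ) * ε / 4 ≤ (S.card : ℝ) * (ε / 4) := by
      have : (m:ℝ) ≤ (S.card : ℝ) := by exact_mod_cast hScard
      calc (m:ℝ) * ε / 4 = (m:ℝ) * (ε / 4) := by ring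
        _ ≤ (S.card : ℝ) * (ε / 4) := by
            apply mul_le_mul_of_nonneg_right this
            linarith
    cases hSsign with
    | inl hSsign =>
      have hpos : ∀ i ∈ S, ε / 4 < x i k := by
        intro i hi
        have h1 : i ∈ P k := by rw [hkP]; exact hSsign i hi
        have h2 : 0 < x i k := (Finset.mem_filter.1 h1).2
        have := hmem i
        rw [abs_of_pos h2] at this
        exact this
      have hsum : (S.card : ℝ) * (ε / 4) < ∑ i ∈ S, x i k := by
        have hc : ∑ _i ∈ S, (ε / 4) = (S.card : ℝ) * (ε / 4) := by
          rw [Finset.sum_const, nsmul_eq_mul]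
        rw [← hc]
        exact Finset.sum_lt_sum_of_nonempty hSne hpos
      calc (m:ℝ) * ε / 4 ≤ (S.card : ℝ) * (ε / 4) := hcard
        _ < ∑ i ∈ S, x i k := hsum
        _ ≤ |z k| := by rw [hzapp]; exact le_abs_self _
    | inr hSsign =>
      have hneg : ∀ i ∈ S, x i k < -(ε / 4) := by
        intro i hi
        have h1 : i ∉ P k := by rw [hkP]; exact hSsign i hi
        have h2 : ¬ 0 < x i k := fun hlt => h1 (Finset.mem_filter.2 ⟨Finset.mem_univ i, hlt⟩)
        push_neg at h2
        have := hmem i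
        rw [abs_of_nonpos h2] at this
        linarith
      have hsum : ∑ i ∈ S, x i k < (S.card : ℝ) * (-(ε / 4)) := by
        have hc : ∑ _i ∈ S, (-(ε / 4)) = (S.card : ℝ) * (-(ε / 4)) := by
          rw [Finset.sum_const, nsmul_eq_mul]
        rw [← hc]
        exact Finset.sum_lt_sum_of_nonempty hSne hneg
      have : -(z k) > (m:ℝ) * ε / 4 := by
        rw [hzapp]
        have : (S.card : ℝ) * (-(ε / 4)) = -((S.card : ℝ) * (ε / 4)) := by ring
        rw [this] at hsum
        linarith
      calc (m:ℝ) * ε / 4 < -(z k) := this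
        _ ≤ |z k| := neg_le_abs _
  -- the element y and its norm bound
  set y : LinfC0 Γ := ∑ i ∈ S, oneFun Γ (σ i) with hy
  have hynorm : ‖y‖ ≤ 1 := by
    apply lp.norm_le_of_forall_le zero_le_one
    intro n
    have hyn : y n = ∑ i ∈ S, (oneFun Γ (σ i)) n := by
      rw [hy, lp.coeFn_sum, Finset.sum_apply]
    rw [hyn]
    rw [← ZeroAtInftyContinuousMap.norm_toBCF_eq_norm]
    refine (BoundedContinuousFunction.norm_le zero_le_one).2 fun γ => ?_
    have happ : (ZeroAtInftyContinuousMap.toBCF (∑ i ∈ S, (oneFun Γ (σ i)) n)) γ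
        = ∑ i ∈ S, ((oneFun Γ (σ i)) n : C₀(Γ, ℝ)) γ := by
      rw [ZeroAtInftyContinuousMap.toBCF_apply, c0_sum_apply]
    rw [happ]
    have hterm : ∀ i ∈ S, ((oneFun Γ (σ i)) n : C₀(Γ, ℝ)) γ
        = if γ = σ i n then (1:ℝ) else 0 := by
      intro i _
      show Set.indicator {β : Γ | (n, β) ∈ {p : ℕ × Γ | σ i p.1 = p.2}} 1 γ = _
      rw [Set.indicator_apply]
      simp
    rw [Finset.sum_congr rfl hterm, Finset.sum_boole]
    have hcard1 : (S.filter fun i => γ = σ i n).card ≤ 1 := by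
      apply Finset.card_le_one.2
      intro a ha b hb
      have ha' := (Finset.mem_filter.1 ha).2
      have hb' := (Finset.mem_filter.1 hb).2
      by_contra hab
      exact hdis a b hab n (ha'.symm.trans hb')
    rw [Real.norm_eq_abs, abs_of_nonneg (by positivity)]
    exact_mod_cast hcard1
  -- T y = mk z
  have hTy : T y = Submodule.Quotient.mk z := by
    rw [hy, map_sum, hz]
    have : (Submodule.Quotient.mk (∑ i ∈ S, x i) : LinfModC0)
        = ∑ i ∈ S, (Submodule.Quotient.mk (x i) : LinfModC0) := by
      rw [← Submodule.mkQ_apply, map_sum]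
      rfl
    rw [this]
    exact Finset.sum_congr rfl fun i _ => (hx i).symm
  have hTnorm : ‖(Submodule.Quotient.mk z : LinfModC0)‖ ≤ ‖T‖ := by
    rw [← hTy]
    calc ‖T y‖ ≤ ‖T‖ * ‖y‖ := T.le_opNorm y
      _ ≤ ‖T‖ * 1 := by apply mul_le_mul_of_nonneg_left hynorm hm4
      _ = ‖T‖ := mul_one _
  -- find a small representative
  have hδ : 0 < (m:ℝ) * ε / 4 - ‖T‖ := by linarith
  obtain ⟨w, hw, hwn⟩ := Submodule.Quotient.norm_mk_lt
    (Submodule.Quotient.mk z : LinfModC0) hδ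
  have hwlt : ‖w‖ < (m:ℝ) * ε / 4 := by
    calc ‖w‖ < ‖(Submodule.Quotient.mk z : LinfModC0)‖ + ((m:ℝ) * ε / 4 - ‖T‖) := hwn
      _ ≤ ‖T‖ + ((m:ℝ) * ε / 4 - ‖T‖) := by linarith
      _ = (m:ℝ) * ε / 4 := by ring
  have hc : z - w ∈ c0Null := by
    rw [← Submodule.Quotient.mk_eq_zero]
    rw [Submodule.Quotient.mk_sub, hw, sub_self]
  have hctend : Tendsto (fun n => (z - w) n) atTop (nhds (0:ℝ)) := hc
  have hev : ∀ᶠ k in atTop, |(z - w) k| < (m:ℝ) * ε / 4 - ‖w‖ := by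
    have := (Metric.tendsto_nhds.1 hctend) ((m:ℝ) * ε / 4 - ‖w‖) (by linarith)
    filter_upwards [this] with k hk
    simpa [Real.dist_eq] using hk
  have hfreq : ∃ᶠ k in atTop, k ∈ {k | k ∈ (⋂ i, {k : ℕ | |x i k| > ε / 4}) ∧ P k = pat} :=
    Nat.frequently_atTop_iff_infinite.2 hpat
  obtain ⟨k, hkmem, hkev⟩ := (hfreq.and_eventually hev).exists
  have h1 : (m:ℝ) * ε / 4 < |z k| := hzk k hkmem
  have h2 : |w k| ≤ ‖w‖ := by
    have := lp.norm_apply_le_norm ENNReal.top_ne_zero w k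
    simpa [Real.norm_eq_abs] using this
  have h3 : (z - w) k = z k - w k := by rw [lp.coeFn_sub, Pi.sub_apply]
  rw [h3] at hkev
  have h4 : |z k| ≤ |w k| + |z k - w k| := by
    have := abs_add_le (w k) (z k - w k)
    simpa using this
  linarith
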